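/- The function x(γ) = (exp(γ)*(γ-1) + 1)/(exp(γ)-1)^2, defined for γ > 0, takes values in the open interval (0, 1/2). -/
import Mathlib

theorem stmt_2 (γ : ℝ) (hγ : 0 < γ) :
    (Real.exp γ * (γ - 1) + 1) / (Real.exp γ - 1) ^ 2 ∈ Set.Ioo (0 : ℝ) (1 / 2) := by
  have he : 0 < Real.exp γ := Real.exp_pos γ
  have h1 : (1 : ℝ) + γ < Real.exp γ := by
    have := Real.add_one_lt_exp (ne_of_gt hγ); linarith
  have hden : 0 < (Real.exp γ - 1) ^ 2 := by nlinarith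
  -- numerator positive: exp(-γ) > 1 - γ
  have hneg : 1 - γ < (Real.exp γ)⁻¹ := by
    have := Real.add_one_lt_exp (by linarith : -γ ≠ 0)
    rw [Real.exp_neg] at this; linarith
  have hnum : 0 < Real.exp γ * (γ - 1) + 1 := by
    have : Real.exp γ * (1 - γ) < 1 := by
      calc Real.exp γ * (1 - γ) < Real.exp γ * (Real.exp γ)⁻¹ := by
            exact mul_lt_mul_of_pos_left hneg he
        _ = 1 := mul_inv_cancel₀ (ne_of_gt he)
    nlinarith
  -- sinh inequality: γ < sinh γ = (exp γ - exp(-γ))/2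
  have hsinh : γ < (Real.exp γ - (Real.exp γ)⁻¹) / 2 := by
    have := Real.self_lt_sinh_iff.mpr hγ
    rwa [Real.sinh_eq, Real.exp_neg] at this
  have hinv : Real.exp γ * (Real.exp γ)⁻¹ = 1 := mul_inv_cancel₀ (ne_of_gt he)
  constructor
  · exact div_pos hnum hden
  · rw [div_lt_div_iff₀ hden (by norm_num : (0:ℝ) < 2)]
    nlinarith [mul_lt_mul_of_pos_left hsinh he]
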